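/- arXiv:2204.00191 — 3 statements merged into one kernel-verified Lean document; each statement's English description precedes it below -/
import Mathlib

section
/- Let h : [0,1] → ℝ be positive, strictly concave, and subdifferentiable, with supporting-line upper bound ĥ(λ) = min{h(0) + ∂h(0)·λ, h(1) + ∂h(1)·(λ−1)}. Let λ* = (h(1) − h(0) − ∂h(1))/(∂h(0) − ∂h(1)), let τ = ĥ(λ*)/(λ*·h(1) + (1−λ*)·h(0)), and define the affine function h̄(λ) = τ·(h(1) − h(0))·λ + τ·h(0). Then τ ≥ 1 and for all λ ∈ [0,1], (1/τ)·h̄(λ) ≤ h(λ) ≤ h̄(λ). -/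
theorem stmt_0 (h : ℝ → ℝ) (d0 d1 : ℝ)
    (hpos : ∀ x ∈ Set.Icc (0:ℝ) 1, 0 < h x)
    (hconc : StrictConcaveOn ℝ (Set.Icc (0:ℝ) 1) h)
    (hsub0 : ∀ x ∈ Set.Icc (0:ℝ) 1, h x ≤ h 0 + d0 * x)
    (hsub1 : ∀ x ∈ Set.Icc (0:ℝ) 1, h x ≤ h 1 + d1 * (x - 1))
    (hd : d1 < d0) :
    let hhat : ℝ → ℝ := fun x => min (h 0 + d0 * x) (h 1 + d1 * (x - 1))
    let lam : ℝ := (h 1 - h 0 - d1) / (d0 - d1)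
    let τ : ℝ := hhat lam / (lam * h 1 + (1 - lam) * h 0)
    let hbar : ℝ → ℝ := fun x => τ * (h 1 - h 0) * x + τ * h 0
    1 ≤ τ ∧ ∀ x ∈ Set.Icc (0:ℝ) 1, (1 / τ) * hbar x ≤ h x ∧ h x ≤ hbar x := by
  intro hhat lam τ hbar
  have h0mem : (0:ℝ) ∈ Set.Icc (0:ℝ) 1 := by constructor <;> norm_num
  have h1mem : (1:ℝ) ∈ Set.Icc (0:ℝ) 1 := by constructor <;> norm_num
  have hh0 : 0 < h 0 := hpos 0 h0mem
  have hh1 : 0 < h 1 := hpos 1 h1mem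
  have hdd : (0:ℝ) < d0 - d1 := by linarith
  have ha : 0 ≤ h 1 - h 0 - d1 := by have := hsub1 0 h0mem; linarith
  have hb : 0 ≤ d0 - (h 1 - h 0) := by have := hsub0 1 h1mem; linarith
  have hlam0 : 0 ≤ lam := div_nonneg ha hdd.le
  have hlam1 : lam ≤ 1 := by
    rw [div_le_one hdd]; linarith
  -- the two lines meet at lam
  have heq : h 0 + d0 * lam = h 1 + d1 * (lam - 1) := by
    have : lam * (d0 - d1) = h 1 - h 0 - d1 := by
      exact div_mul_cancel₀ _ hdd.ne'
    nlinarith [this]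
  have hhatlam : hhat lam = h 0 + d0 * lam := by
    simp only [hhat, heq, min_self]
  have hD : 0 < lam * h 1 + (1 - lam) * h 0 := by
    nlinarith [mul_nonneg hlam0 hh1.le, mul_nonneg (sub_nonneg.2 hlam1) hh0.le,
      mul_pos hh0 hh1]
  have hND : lam * h 1 + (1 - lam) * h 0 ≤ h 0 + d0 * lam := by nlinarith
  have hτ1 : 1 ≤ τ := by
    rw [show τ = (h 0 + d0 * lam) / (lam * h 1 + (1 - lam) * h 0) by
      simp only [τ, hhatlam]]
    rw [le_div_iff₀ hD]; linarith
  have hτpos : 0 < τ := lt_of_lt_of_le one_pos hτ1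
  have hτD : τ * (lam * h 1 + (1 - lam) * h 0) = h 0 + d0 * lam := by
    simp only [τ, hhatlam]
    rw [div_mul_cancel₀ _ hD.ne']
  refine ⟨hτ1, fun x hx => ?_⟩
  obtain ⟨hx0, hx1⟩ := hx
  constructor
  · -- lower bound: (1/τ) * hbar x = chord ≤ h x by concavity
    have hchord : (1-x) * h 0 + x * h 1 ≤ h x := by
      have := hconc.concaveOn.2 h0mem h1mem (by linarith : (0:ℝ) ≤ 1 - x)
        (by linarith : (0:ℝ) ≤ x) (by ring)
      simpa using this
    have : (1 / τ) * hbar x = (h 1 - h 0) * x + h 0 := by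
      simp only [hbar]; field_simp
    rw [this]; linarith
  · -- upper bound
    simp only [hbar]
    rcases le_total x lam with hxl | hxl
    · have hs := hsub0 x ⟨hx0, hx1⟩
      have key : h 0 + d0 * x ≤ τ * (h 1 - h 0) * x + τ * h 0 := by
        rcases eq_or_lt_of_le hlam0 with hl | hl
        · have hx : x = 0 := le_antisymm (hl ▸ hxl) hx0
          subst hx; nlinarith
        · nlinarith [mul_nonneg (mul_nonneg (sub_nonneg.2 hτ1) hh0.le)
            (sub_nonneg.2 hxl), hτD, mul_pos hl hl]
      linarith
    · have hs := hsub1 x ⟨hx0, hx1⟩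
      have key : h 1 + d1 * (x - 1) ≤ τ * (h 1 - h 0) * x + τ * h 0 := by
        rcases eq_or_lt_of_le hlam1 with hl | hl
        · have hx : x = 1 := le_antisymm hx1 (hl ▸ hxl)
          subst hx; rw [hl] at hτD; nlinarith
        · nlinarith [mul_nonneg (mul_nonneg (sub_nonneg.2 hτ1) hh1.le)
            (sub_nonneg.2 hxl), hτD, heq, mul_pos (sub_pos.2 hl) (sub_pos.2 hl)]
      linarith
end

section
/- Fix ε ∈ (0, 1/2) and real numbers ℓ₁ ≤ u₁, ℓ₂ ≤ u₂. For λ ∈ [0,1] let (ℓ_λ, u_λ) = (1−λ)(ℓ₁, u₁) + λ(ℓ₂, u₂) and s(λ) = g_ε(ℓ_λ, u_λ) = ∫₀^∞ max{Φ(u_λ − t) − Φ(ℓ_λ + t) − (1 − ε), 0} dt. Then s is differentiable on (0,1) with |s'(λ)| ≤ M·(|u₂ − u₁| + |ℓ₂ − ℓ₁|), where M = max{|u₁|, |u₂|, |ℓ₁|, |ℓ₂|}. -/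
open MeasureTheory Set

/-- The standard Gaussian cumulative distribution function. -/
noncomputable def Phi (x : ℝ) : ℝ :=
  (∫ s in Set.Iic x, Real.exp (-s ^ 2 / 2)) / Real.sqrt (2 * Real.pi)

lemma gauss_integrable : Integrable (fun s : ℝ => Real.exp (-s ^ 2 / 2)) := by
  have := integrable_exp_neg_mul_sq (b := (1/2 : ℝ)) (by norm_num)
  convert this using 2 with s
  ring_nf

lemma sqrt_two_pi_pos : (0:ℝ) < Real.sqrt (2 * Real.pi) :=
  Real.sqrt_pos.2 (by positivity)

lemma one_le_sqrt_two_pi : (1:ℝ) ≤ Real.sqrt (2 * Real.pi) := by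
  rw [show (1:ℝ) = Real.sqrt 1 by simp]
  exact Real.sqrt_le_sqrt (by nlinarith [Real.pi_gt_three])

lemma Phi_sub_Phi (a b : ℝ) :
    Phi b - Phi a = (∫ s in a..b, Real.exp (-s ^ 2 / 2)) / Real.sqrt (2 * Real.pi) := by
  rw [Phi, Phi, div_sub_div_same,
    intervalIntegral.integral_Iic_sub_Iic gauss_integrable.integrableOn
      gauss_integrable.integrableOn]

lemma hasDerivAt_Phi (x : ℝ) :
    HasDerivAt Phi (Real.exp (-x ^ 2 / 2) / Real.sqrt (2 * Real.pi)) x := by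
  have key : HasDerivAt (fun y => ∫ s in (0:ℝ)..y, Real.exp (-s ^ 2 / 2))
      (Real.exp (-x ^ 2 / 2)) x := by
    refine intervalIntegral.integral_hasDerivAt_right
      gauss_integrable.intervalIntegrable ?_ ?_
    · exact (Real.continuous_exp.comp (by continuity)).stronglyMeasurableAtFilter _ _
    · exact (Real.continuous_exp.comp (by continuity)).continuousAt
  have : HasDerivAt (fun y => Phi 0 + (∫ s in (0:ℝ)..y, Real.exp (-s ^ 2 / 2)) / Real.sqrt (2 * Real.pi))
      (Real.exp (-x ^ 2 / 2) / Real.sqrt (2 * Real.pi)) x :=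
    ((key.div_const _).const_add _)
  refine this.congr_of_eventuallyEq (Filter.Eventually.of_forall fun y => ?_)
  have := Phi_sub_Phi 0 y
  linarith

lemma Phi_lipschitz (a b : ℝ) : |Phi b - Phi a| ≤ |b - a| := by
  rw [Phi_sub_Phi, abs_div, abs_of_pos sqrt_two_pi_pos]
  have hb : ‖∫ s in a..b, Real.exp (-s ^ 2 / 2)‖ ≤ 1 * |b - a| := by
    refine intervalIntegral.norm_integral_le_of_norm_le_const fun s _ => ?_
    rw [Real.norm_eq_abs, abs_of_pos (Real.exp_pos _)]
    exact Real.exp_le_one_iff.2 (by nlinarith [sq_nonneg s])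
  rw [Real.norm_eq_abs] at hb
  have h2 : |∫ s in a..b, Real.exp (-s ^ 2 / 2)| / Real.sqrt (2 * Real.pi)
      ≤ |∫ s in a..b, Real.exp (-s ^ 2 / 2)| :=
    div_le_self (abs_nonneg _) one_le_sqrt_two_pi
  linarith

lemma Phi_strictMono : StrictMono Phi := by
  intro a b hab
  have : 0 < ∫ s in a..b, Real.exp (-s ^ 2 / 2) :=
    intervalIntegral.intervalIntegral_pos_of_pos
      gauss_integrable.intervalIntegrable (fun s => Real.exp_pos _) hab
  have h2 := Phi_sub_Phi a b
  nlinarith [sqrt_two_pi_pos, div_pos this sqrt_two_pi_pos]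

lemma Phi_mono : Monotone Phi := Phi_strictMono.monotone

lemma Phi_nonneg (x : ℝ) : 0 ≤ Phi x := by
  apply div_nonneg _ sqrt_two_pi_pos.le
  exact setIntegral_nonneg measurableSet_Iic fun s _ => (Real.exp_pos _).le

lemma Phi_le_one (x : ℝ) : Phi x ≤ 1 := by
  rw [Phi, div_le_one sqrt_two_pi_pos]
  have h1 : ∫ s in Set.Iic x, Real.exp (-s ^ 2 / 2) ≤ ∫ s : ℝ, Real.exp (-s ^ 2 / 2) :=
    setIntegral_le_integral gauss_integrable
      (Filter.Eventually.of_forall fun s => (Real.exp_pos _).le)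
  have h2 : ∫ s : ℝ, Real.exp (-s ^ 2 / 2) = Real.sqrt (2 * Real.pi) := by
    have := integral_gaussian (1/2)
    rw [show Real.pi / (1/2) = 2 * Real.pi by ring] at this
    rw [← this]
    congr 1 with s
    ring_nf
  linarith


/-- `g ε ℓ u = ∫₀^∞ max{Φ(u − t) − Φ(ℓ + t) − (1 − ε), 0} dt`. -/
noncomputable def g (ε ℓ u : ℝ) : ℝ :=
  ∫ t in Set.Ioi (0:ℝ), max (Phi (u - t) - Phi (ℓ + t) - (1 - ε)) 0

theorem stmt_8 (ε : ℝ) (hε : ε ∈ Set.Ioo (0:ℝ) (1/2))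
    (ℓ₁ u₁ ℓ₂ u₂ : ℝ) (h₁ : ℓ₁ ≤ u₁) (h₂ : ℓ₂ ≤ u₂) :
    let s : ℝ → ℝ := fun lam => g ε ((1 - lam) * ℓ₁ + lam * ℓ₂) ((1 - lam) * u₁ + lam * u₂)
    let M : ℝ := max (max |u₁| |u₂|) (max |ℓ₁| |ℓ₂|)
    ∀ lam ∈ Set.Ioo (0:ℝ) 1, ∃ d : ℝ, HasDerivAt s d lam ∧
      |d| ≤ M * (|u₂ - u₁| + |ℓ₂ - ℓ₁|) := by
  intro s M lam0 hlam0
  obtain ⟨hε0, hε2⟩ := hε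
  set u : ℝ → ℝ := fun lam => (1 - lam) * u₁ + lam * u₂ with hu
  set ℓ : ℝ → ℝ := fun lam => (1 - lam) * ℓ₁ + lam * ℓ₂ with hl
  set K : ℝ := |u₂ - u₁| + |ℓ₂ - ℓ₁| with hKdef
  have hK0 : 0 ≤ K := by positivity
  set h : ℝ → ℝ → ℝ := fun lam t => Phi (u lam - t) - Phi (ℓ lam + t) - (1 - ε) with hh
  set F : ℝ → ℝ → ℝ := fun lam t => max (h lam t) 0 with hF
  set D : ℝ → ℝ := fun t =>
    (Real.exp (-(u lam0 - t) ^ 2 / 2) / Real.sqrt (2 * Real.pi)) * (u₂ - u₁) -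
    (Real.exp (-(ℓ lam0 + t) ^ 2 / 2) / Real.sqrt (2 * Real.pi)) * (ℓ₂ - ℓ₁) with hD
  set F' : ℝ → ℝ := fun t => Set.indicator {t : ℝ | 0 < h lam0 t} D t with hF'
  set μ : Measure ℝ := volume.restrict (Set.Ioi (0:ℝ)) with hμ
  have hM0 : (0:ℝ) ≤ M := le_trans (abs_nonneg u₁) (le_max_of_le_left (le_max_left _ _))
  have hMu1 : |u₁| ≤ M := le_max_of_le_left (le_max_left _ _)
  have hMu2 : |u₂| ≤ M := le_max_of_le_left (le_max_right _ _)
  have hMl1 : |ℓ₁| ≤ M := le_max_of_le_right (le_max_left _ _)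
  have hMl2 : |ℓ₂| ≤ M := le_max_of_le_right (le_max_right _ _)
  have combo : ∀ a b lam : ℝ, lam ∈ Set.Icc (0:ℝ) 1 → |a| ≤ M → |b| ≤ M →
      |(1 - lam) * a + lam * b| ≤ M := by
    rintro a b lam ⟨h0, h1⟩ ha hb
    calc |(1 - lam) * a + lam * b| ≤ |(1 - lam) * a| + |lam * b| := abs_add_le _ _
      _ = (1 - lam) * |a| + lam * |b| := by
          rw [abs_mul, abs_mul, abs_of_nonneg (by linarith : (0:ℝ) ≤ 1 - lam),
            abs_of_nonneg h0]
      _ ≤ (1 - lam) * M + lam * M := by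
          have := abs_nonneg a; have := abs_nonneg b; nlinarith
      _ = M := by ring
  have hlam0Icc : lam0 ∈ Set.Icc (0:ℝ) 1 := ⟨hlam0.1.le, hlam0.2.le⟩
  have hubd : ∀ lam ∈ Set.Icc (0:ℝ) 1, |u lam| ≤ M := fun lam hlam =>
    combo u₁ u₂ lam hlam hMu1 hMu2
  have hlbd : ∀ lam ∈ Set.Icc (0:ℝ) 1, |ℓ lam| ≤ M := fun lam hlam =>
    combo ℓ₁ ℓ₂ lam hlam hMl1 hMl2
  -- vanishing beyond M
  have hvanish : ∀ lam ∈ Set.Icc (0:ℝ) 1, ∀ t : ℝ, M < t → F lam t = 0 := by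
    intro lam hlam t ht
    have h1 : u lam ≤ M := (abs_le.1 (hubd lam hlam)).2
    have h2 : -M ≤ ℓ lam := (abs_le.1 (hlbd lam hlam)).1
    have h3 : Phi (u lam - t) ≤ Phi (ℓ lam + t) := Phi_mono (by linarith)
    have h4 : h lam t ≤ 0 := by simp only [hh]; linarith
    exact max_eq_right h4
  -- positivity implies t < M
  have hsmall : ∀ t : ℝ, 0 < h lam0 t → t ≤ M := by
    intro t ht
    by_contra hc
    push_neg at hc
    have hv := hvanish lam0 hlam0Icc t hc
    simp only [hF] at hv
    rw [max_eq_left ht.le] at hv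
    linarith
  -- the ball
  set r : ℝ := min lam0 (1 - lam0) with hr
  have hr0 : 0 < r := lt_min hlam0.1 (by linarith [hlam0.2])
  have hball : Metric.ball lam0 r ⊆ Set.Icc (0:ℝ) 1 := by
    intro x hx
    rw [Metric.mem_ball, Real.dist_eq] at hx
    have := abs_lt.1 hx
    have hr1 : r ≤ lam0 := min_le_left _ _
    have hr2 : r ≤ 1 - lam0 := min_le_right _ _
    constructor <;> linarith [this.1, this.2]
  have Phi_diff : Differentiable ℝ Phi := fun x => (hasDerivAt_Phi x).differentiableAt
  have Phi_cont : Continuous Phi := Phi_diff.continuous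
  have hFcont : ∀ lam : ℝ, Continuous (fun t => F lam t) := by
    intro lam
    apply Continuous.max _ continuous_const
    exact ((Phi_cont.comp (continuous_const.sub continuous_id)).sub
      (Phi_cont.comp (continuous_const.add continuous_id))).sub continuous_const
  have hF_meas : ∀ᶠ x in nhds lam0, AEStronglyMeasurable (F x) μ :=
    Filter.Eventually.of_forall fun x => (hFcont x).aestronglyMeasurable
  -- bound function
  set bound : ℝ → ℝ := fun t => Set.indicator (Set.Icc (0:ℝ) M) (fun _ => K) t with hbound
  have hμIcc : μ (Set.Icc (0:ℝ) M) < ⊤ := by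
    simp only [hμ, Measure.restrict_apply measurableSet_Icc]
    exact lt_of_le_of_lt (measure_mono inter_subset_left) measure_Icc_lt_top
  have bound_int : Integrable bound μ := by
    simp only [hbound]
    rw [integrable_indicator_iff measurableSet_Icc]
    exact integrableOn_const hμIcc.ne enorm_ne_top
  have one_int : Integrable (Set.indicator (Set.Icc (0:ℝ) M) (fun _ => (1:ℝ))) μ := by
    rw [integrable_indicator_iff measurableSet_Icc]
    exact integrableOn_const hμIcc.ne enorm_ne_top
  have hF_int : Integrable (F lam0) μ := by
    refine one_int.mono' (hFcont lam0).aestronglyMeasurable ?_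
    filter_upwards [ae_restrict_mem measurableSet_Ioi] with t ht
    simp only [hF, hh]
    by_cases hc : t ≤ M
    · rw [Set.indicator_of_mem (show t ∈ Set.Icc (0:ℝ) M from ⟨le_of_lt ht, hc⟩)]
      rw [Real.norm_eq_abs, abs_of_nonneg (le_max_right _ _)]
      apply max_le _ zero_le_one
      have := Phi_le_one (u lam0 - t)
      have := Phi_nonneg (ℓ lam0 + t)
      linarith
    · rw [Set.indicator_of_notMem (fun hmem : t ∈ Set.Icc (0:ℝ) M => hc hmem.2)]
      have hv := hvanish lam0 hlam0Icc t (lt_of_not_ge hc)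
      simp only [hF, hh] at hv
      rw [hv, norm_zero]
  -- F' measurable
  have hhcont : Continuous (fun t => h lam0 t) := by
    exact ((Phi_cont.comp (continuous_const.sub continuous_id)).sub
      (Phi_cont.comp (continuous_const.add continuous_id))).sub continuous_const
  have hsetm : MeasurableSet {t : ℝ | 0 < h lam0 t} :=
    measurableSet_lt measurable_const hhcont.measurable
  have hDcont : Continuous D := by
    have c1 : Continuous fun t : ℝ => -(u lam0 - t) ^ 2 / 2 :=
      (((continuous_const.sub continuous_id).pow 2).neg).div_const 2
    have c2 : Continuous fun t : ℝ => -(ℓ lam0 + t) ^ 2 / 2 :=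
      (((continuous_const.add continuous_id).pow 2).neg).div_const 2
    exact (((Real.continuous_exp.comp c1).div_const _).mul continuous_const).sub
      (((Real.continuous_exp.comp c2).div_const _).mul continuous_const)
  have hF'_meas : AEStronglyMeasurable F' μ :=
    (hDcont.measurable.indicator hsetm).aestronglyMeasurable
  -- Lipschitz
  have h_lip : ∀ᵐ t ∂μ, LipschitzOnWith (Real.nnabs (bound t)) (fun x => F x t)
      (Metric.ball lam0 r) := by
    filter_upwards [ae_restrict_mem measurableSet_Ioi] with t ht
    apply LipschitzOnWith.of_dist_le_mul
    intro x hx y hy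
    rw [Real.coe_nnabs, Real.dist_eq, Real.dist_eq]
    simp only [hbound]
    by_cases hc : t ≤ M
    · rw [Set.indicator_of_mem (show t ∈ Set.Icc (0:ℝ) M from ⟨le_of_lt ht, hc⟩),
        abs_of_nonneg hK0]
      have e1 : u x - t - (u y - t) = (x - y) * (u₂ - u₁) := by simp only [hu]; ring
      have e2 : ℓ x + t - (ℓ y + t) = (x - y) * (ℓ₂ - ℓ₁) := by simp only [hl]; ring
      have l1 := Phi_lipschitz (u y - t) (u x - t)
      have l2 := Phi_lipschitz (ℓ y + t) (ℓ x + t)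
      rw [e1, abs_mul] at l1
      rw [e2, abs_mul] at l2
      have step1 : |F x t - F y t| ≤ |h x t - h y t| := abs_max_sub_max_le_abs _ _ _
      have step2 : |h x t - h y t| ≤
          |Phi (u x - t) - Phi (u y - t)| + |Phi (ℓ x + t) - Phi (ℓ y + t)| := by
        have : h x t - h y t =
            (Phi (u x - t) - Phi (u y - t)) - (Phi (ℓ x + t) - Phi (ℓ y + t)) := by
          simp only [hh]; ring
        rw [this, sub_eq_add_neg]
        exact (abs_add_le _ _).trans (by rw [abs_neg])
      calc |F x t - F y t| ≤ |h x t - h y t| := step1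
        _ ≤ _ + _ := step2
        _ ≤ |x - y| * |u₂ - u₁| + |x - y| * |ℓ₂ - ℓ₁| := add_le_add l1 l2
        _ = K * |x - y| := by rw [hKdef]; ring
    · rw [hvanish x (hball hx) t (lt_of_not_ge hc),
        hvanish y (hball hy) t (lt_of_not_ge hc),
        Set.indicator_of_notMem (fun hmem : t ∈ Set.Icc (0:ℝ) M => hc hmem.2)]
      simp
  -- a.e. nonzero
  have hanti : StrictAnti (fun t => h lam0 t) := by
    intro t t' htt'
    have a1 : Phi (u lam0 - t') < Phi (u lam0 - t) := Phi_strictMono (by linarith)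
    have a2 : Phi (ℓ lam0 + t) < Phi (ℓ lam0 + t') := Phi_strictMono (by linarith)
    simp only [hh]; linarith
  have hZ : volume {t : ℝ | h lam0 t = 0} = 0 := by
    apply Set.Subsingleton.measure_zero
    intro a ha b hb
    exact hanti.injective (by simpa using ha.trans hb.symm)
  have hae : ∀ᵐ t ∂μ, h lam0 t ≠ 0 := by
    apply ae_restrict_of_ae
    rw [ae_iff]
    simpa using hZ
  -- differentiability a.e.
  have h_diff : ∀ᵐ t ∂μ, HasDerivAt (fun x => F x t) (F' t) lam0 := by
    filter_upwards [hae] with t hht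
    have hu' : HasDerivAt (fun x : ℝ => u x - t) (u₂ - u₁) lam0 := by
      have h1 : HasDerivAt (fun x : ℝ => (1 - x) * u₁ + x * u₂ - t)
          (-1 * u₁ + 1 * u₂) lam0 :=
        ((((hasDerivAt_id' (x := lam0)).const_sub 1).mul_const u₁).add
          ((hasDerivAt_id' (x := lam0)).mul_const u₂)).sub_const t
      have : -1 * u₁ + 1 * u₂ = u₂ - u₁ := by ring
      rw [this] at h1
      exact h1
    have hl' : HasDerivAt (fun x : ℝ => ℓ x + t) (ℓ₂ - ℓ₁) lam0 := by
      have h1 : HasDerivAt (fun x : ℝ => (1 - x) * ℓ₁ + x * ℓ₂ + t)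
          (-1 * ℓ₁ + 1 * ℓ₂) lam0 :=
        ((((hasDerivAt_id' (x := lam0)).const_sub 1).mul_const ℓ₁).add
          ((hasDerivAt_id' (x := lam0)).mul_const ℓ₂)).add_const t
      have : -1 * ℓ₁ + 1 * ℓ₂ = ℓ₂ - ℓ₁ := by ring
      rw [this] at h1
      exact h1
    have hPu : HasDerivAt (fun x => Phi (u x - t))
        ((Real.exp (-(u lam0 - t) ^ 2 / 2) / Real.sqrt (2 * Real.pi)) * (u₂ - u₁)) lam0 :=
      by have := (hasDerivAt_Phi (u lam0 - t)).comp lam0 hu'; exact this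
    have hPl : HasDerivAt (fun x => Phi (ℓ x + t))
        ((Real.exp (-(ℓ lam0 + t) ^ 2 / 2) / Real.sqrt (2 * Real.pi)) * (ℓ₂ - ℓ₁)) lam0 :=
      by have := (hasDerivAt_Phi (ℓ lam0 + t)).comp lam0 hl'; exact this
    have hDer : HasDerivAt (fun x => h x t) (D t) lam0 := (hPu.sub hPl).sub_const _
    rcases lt_or_gt_of_ne hht with hneg | hpos
    · have hF'0 : F' t = 0 := by
        simp only [hF']
        exact Set.indicator_of_notMem
          (show t ∉ {t : ℝ | 0 < h lam0 t} by simp only [Set.mem_setOf_eq]; push_neg; linarith) _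
      rw [hF'0]
      have hev0 : ∀ᶠ x in nhds lam0, h x t < 0 :=
        hDer.continuousAt.eventually_lt_const hneg
      have hev : (fun x => F x t) =ᶠ[nhds lam0] fun _ => (0:ℝ) := by
        filter_upwards [hev0] with x hx
        exact max_eq_right hx.le
      exact (hasDerivAt_const lam0 (0:ℝ)).congr_of_eventuallyEq hev
    · have hF'D : F' t = D t := by
        simp only [hF']
        exact Set.indicator_of_mem (show t ∈ {t : ℝ | 0 < h lam0 t} from hpos) _
      rw [hF'D]
      have hev0 : ∀ᶠ x in nhds lam0, 0 < h x t :=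
        hDer.continuousAt.eventually_const_lt hpos
      have hev : (fun x => F x t) =ᶠ[nhds lam0] fun x => h x t := by
        filter_upwards [hev0] with x hx
        exact max_eq_left hx.le
      exact hDer.congr_of_eventuallyEq hev
  obtain ⟨hint, hderiv⟩ := hasDerivAt_integral_of_dominated_loc_of_lip (Metric.ball_mem_nhds lam0 hr0) hF_meas hF_int
    hF'_meas h_lip bound_int h_diff
  refine ⟨∫ t, F' t ∂μ, ?_, ?_⟩
  · have hs : s = fun lam => ∫ t, F lam t ∂μ := rfl
    rw [hs]
    exact hderiv
  · -- bound on the derivative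
    have hφbd : ∀ x : ℝ, 0 ≤ Real.exp (-x ^ 2 / 2) / Real.sqrt (2 * Real.pi) ∧
        Real.exp (-x ^ 2 / 2) / Real.sqrt (2 * Real.pi) ≤ 1 := by
      intro x
      constructor
      · positivity
      · rw [div_le_one sqrt_two_pi_pos]
        exact le_trans (Real.exp_le_one_iff.2 (by nlinarith [sq_nonneg x])) one_le_sqrt_two_pi
    have hb : ∀ᵐ t ∂μ, ‖F' t‖ ≤ bound t := by
      filter_upwards [ae_restrict_mem measurableSet_Ioi] with t ht
      by_cases hpos : 0 < h lam0 t
      · have htM : t ≤ M := hsmall t hpos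
        simp only [hF', hbound]
        rw [Set.indicator_of_mem (show t ∈ {t : ℝ | 0 < h lam0 t} from hpos),
          Set.indicator_of_mem (show t ∈ Set.Icc (0:ℝ) M from ⟨le_of_lt ht, htM⟩)]
        obtain ⟨he1a, he1b⟩ := hφbd (u lam0 - t)
        obtain ⟨he2a, he2b⟩ := hφbd (ℓ lam0 + t)
        rw [Real.norm_eq_abs]
        simp only [hD]
        have step : |Real.exp (-(u lam0 - t) ^ 2 / 2) / Real.sqrt (2 * Real.pi) * (u₂ - u₁) -
            Real.exp (-(ℓ lam0 + t) ^ 2 / 2) / Real.sqrt (2 * Real.pi) * (ℓ₂ - ℓ₁)| ≤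
            Real.exp (-(u lam0 - t) ^ 2 / 2) / Real.sqrt (2 * Real.pi) * |u₂ - u₁| +
            Real.exp (-(ℓ lam0 + t) ^ 2 / 2) / Real.sqrt (2 * Real.pi) * |ℓ₂ - ℓ₁| := by
          rw [sub_eq_add_neg]
          refine (abs_add_le _ _).trans ?_
          rw [abs_neg, abs_mul, abs_mul, abs_of_nonneg he1a, abs_of_nonneg he2a]
        have h1 := abs_nonneg (u₂ - u₁)
        have h2 := abs_nonneg (ℓ₂ - ℓ₁)
        rw [hKdef]
        nlinarith
      · simp only [hF', hbound]
        rw [Set.indicator_of_notMem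
          (show t ∉ {t : ℝ | 0 < h lam0 t} from fun hm => hpos hm), norm_zero]
        exact Set.indicator_nonneg (fun _ _ => hK0) t
    have hnorm := norm_integral_le_of_norm_le bound_int hb
    have hbi : ∫ t, bound t ∂μ = K * M := by
      simp only [hbound]
      rw [integral_indicator measurableSet_Icc, setIntegral_const]
      have hset : Set.Icc (0:ℝ) M ∩ Set.Ioi 0 = Set.Ioc 0 M := by
        ext x
        constructor
        · rintro ⟨⟨_, hx2⟩, hx3⟩; exact ⟨hx3, hx2⟩
        · rintro ⟨hx1, hx2⟩; exact ⟨⟨hx1.le, hx2⟩, hx1⟩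
      simp only [hμ]
      rw [measureReal_def, Measure.restrict_apply measurableSet_Icc, hset, Real.volume_Ioc,
        ENNReal.toReal_ofReal (by linarith), smul_eq_mul]
      ring
    rw [Real.norm_eq_abs, hbi] at hnorm
    calc |∫ t, F' t ∂μ| ≤ K * M := hnorm
      _ = M * K := mul_comm _ _
end

section
/- Fix ε ∈ (0, 1/2) and δ > 0, and let (ℓₙ, uₙ) be a sequence with g_ε(ℓₙ, uₙ) = δ for all n, uₙ ↑ +∞, and ℓₙ bounded. Then ℓₙ → ℓ*, where ℓ* is the unique solution of g(ℓ) = δ with g(ℓ) = ∫₀^∞ max{ε − Φ(ℓ + t), 0} dt. -/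
open MeasureTheory Set

/-- `g̲(ℓ) = ∫₀^∞ max{ε − Φ(ℓ + t), 0} dt`. -/
noncomputable def gunder (ε ℓ : ℝ) : ℝ :=
  ∫ t in Set.Ioi (0:ℝ), max (ε - Phi (ℓ + t)) 0

lemma gauss_eq : (fun s : ℝ => Real.exp (-s ^ 2 / 2)) = fun s => Real.exp (-(1/2) * s ^ 2) := by
  funext s; ring_nf

lemma gauss_total : (∫ s : ℝ, Real.exp (-s ^ 2 / 2)) = Real.sqrt (2 * Real.pi) := by
  rw [gauss_eq, integral_gaussian, show Real.pi / (1/2) = 2 * Real.pi by ring]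

lemma sqrt2pi_pos : 0 < Real.sqrt (2 * Real.pi) :=
  Real.sqrt_pos.2 (by positivity)

lemma Phi_continuous : Continuous Phi := by
  have key : ∀ a b : ℝ,
      dist (∫ s in Set.Iic a, Real.exp (-s ^ 2 / 2))
        (∫ s in Set.Iic b, Real.exp (-s ^ 2 / 2)) ≤ 1 * dist a b := by
    intro a b
    have h1 : (∫ s in Set.Iic a, Real.exp (-s ^ 2 / 2))
        - ∫ s in Set.Iic b, Real.exp (-s ^ 2 / 2) = ∫ x in b..a, Real.exp (-x ^ 2 / 2) :=
      intervalIntegral.integral_Iic_sub_Iic gauss_integrable.integrableOn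
        gauss_integrable.integrableOn
    have h2 : ‖∫ x in b..a, Real.exp (-x ^ 2 / 2)‖ ≤ 1 * |a - b| := by
      apply intervalIntegral.norm_integral_le_of_norm_le_const
      intro x _
      rw [Real.norm_eq_abs, abs_of_pos (Real.exp_pos _)]
      apply Real.exp_le_one_iff.2
      have : (0:ℝ) ≤ x ^ 2 / 2 := by positivity
      linarith
    rw [Real.dist_eq, Real.dist_eq, h1]
    exact (Real.norm_eq_abs _ ▸ h2)
  have hl : LipschitzWith 1 fun x : ℝ => ∫ s in Set.Iic x, Real.exp (-s ^ 2 / 2) :=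
    LipschitzWith.of_dist_le_mul (by exact_mod_cast key)
  exact hl.continuous.div_const _

lemma Phi_tendsto_one : Filter.Tendsto Phi Filter.atTop (nhds 1) := by
  have h : Filter.Tendsto (fun x : ℝ => ∫ s in Set.Iic x, Real.exp (-s ^ 2 / 2)) Filter.atTop
      (nhds (∫ s : ℝ, Real.exp (-s ^ 2 / 2))) :=
    (aecover_Iic Filter.tendsto_id).integral_tendsto_of_countably_generated gauss_integrable
  have h2 := h.div_const (Real.sqrt (2 * Real.pi))
  rw [gauss_total, div_self sqrt2pi_pos.ne'] at h2
  exact h2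

/-- Key limit lemma: if `ℓ n → L` and `u n → ∞`, then `g ε (ℓ n) (u n) → gunder ε L`. -/
lemma g_tendsto_gunder (ε : ℝ) (hε0 : 0 < ε) (hε1 : ε < 1) (ℓ u : ℕ → ℝ) (L : ℝ)
    (hl : Filter.Tendsto ℓ Filter.atTop (nhds L))
    (hu : Filter.Tendsto u Filter.atTop Filter.atTop) :
    Filter.Tendsto (fun n => g ε (ℓ n) (u n)) Filter.atTop (nhds (gunder ε L)) := by
  -- ℓ is bounded below
  obtain ⟨C, hC⟩ : ∃ C : ℝ, ∀ n, -C ≤ ℓ n := by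
    obtain ⟨c, hc⟩ := hl.bddBelow_range
    exact ⟨-c, fun n => by simpa using hc ⟨n, rfl⟩⟩
  -- choose x₀ with ε ≤ Phi x₀
  obtain ⟨x₀, hx₀⟩ : ∃ x₀ : ℝ, ε ≤ Phi x₀ :=
    (Phi_tendsto_one.eventually (eventually_ge_nhds hε1)).exists
  set T : ℝ := x₀ + C with hT
  set bound : ℝ → ℝ := Set.indicator (Set.Ioc (0:ℝ) T) (fun _ => (1:ℝ)) with hbound
  have hmeas : ∀ n, AEStronglyMeasurable
      (fun t => max (Phi (u n - t) - Phi (ℓ n + t) - (1 - ε)) 0)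
      (volume.restrict (Set.Ioi (0:ℝ))) := by
    intro n
    apply Continuous.aestronglyMeasurable
    exact (((Phi_continuous.comp (continuous_const.sub continuous_id)).sub
      (Phi_continuous.comp (continuous_const.add continuous_id))).sub continuous_const).max
      continuous_const
  have hbound_int : Integrable bound (volume.restrict (Set.Ioi (0:ℝ))) := by
    rw [hbound, integrable_indicator_iff measurableSet_Ioc]
    refine integrableOn_const (ne_of_lt ?_) (by simp)
    calc (volume.restrict (Set.Ioi (0:ℝ))) (Set.Ioc 0 T) ≤ volume (Set.Ioc 0 T) :=
          Measure.restrict_apply_le _ _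
      _ < ⊤ := measure_Ioc_lt_top
  have h_bd : ∀ n, ∀ᵐ t ∂(volume.restrict (Set.Ioi (0:ℝ))),
      ‖max (Phi (u n - t) - Phi (ℓ n + t) - (1 - ε)) 0‖ ≤ bound t := by
    intro n
    rw [ae_restrict_iff' measurableSet_Ioi]
    filter_upwards with t ht
    rw [Real.norm_eq_abs, abs_of_nonneg (le_max_right _ _)]
    by_cases htT : t ≤ T
    · have hb : bound t = 1 := Set.indicator_of_mem (Set.mem_Ioc.2 ⟨ht, htT⟩) _
      rw [hb]
      apply max_le _ zero_le_one
      have h1 := Phi_le_one (u n - t)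
      have h2 := Phi_nonneg (ℓ n + t)
      linarith
    · push_neg at htT
      have hb : bound t = 0 := Set.indicator_of_notMem (fun h => absurd h.2 htT.not_ge) _
      rw [hb]
      apply max_le _ le_rfl
      have h1 : x₀ ≤ ℓ n + t := by have := hC n; linarith
      have h2 : ε ≤ Phi (ℓ n + t) := hx₀.trans (Phi_mono h1)
      have h3 := Phi_le_one (u n - t)
      linarith
  have h_lim : ∀ᵐ t ∂(volume.restrict (Set.Ioi (0:ℝ))),
      Filter.Tendsto (fun n => max (Phi (u n - t) - Phi (ℓ n + t) - (1 - ε)) 0)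
        Filter.atTop (nhds (max (ε - Phi (L + t)) 0)) := by
    filter_upwards with t
    have h1 : Filter.Tendsto (fun n => Phi (u n - t)) Filter.atTop (nhds 1) :=
      Phi_tendsto_one.comp (Filter.tendsto_atTop_add_const_right _ (-t) hu)
    have h2 : Filter.Tendsto (fun n => Phi (ℓ n + t)) Filter.atTop (nhds (Phi (L + t))) :=
      (Phi_continuous.tendsto _).comp (hl.add_const t)
    have h3 : Filter.Tendsto (fun n => max (Phi (u n - t) - Phi (ℓ n + t) - (1 - ε)) 0)
        Filter.atTop (nhds (max (1 - Phi (L + t) - (1 - ε)) 0)) :=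
      ((h1.sub h2).sub tendsto_const_nhds).max tendsto_const_nhds
    have he : (1 : ℝ) - Phi (L + t) - (1 - ε) = ε - Phi (L + t) := by ring
    rw [he] at h3
    exact h3
  exact tendsto_integral_of_dominated_convergence bound hmeas hbound_int h_bd h_lim

theorem stmt_13 (ε δ : ℝ) (hε : ε ∈ Set.Ioo (0:ℝ) (1/2)) (hδ : 0 < δ)
    (ℓ u : ℕ → ℝ) (hcurve : ∀ n, g ε (ℓ n) (u n) = δ)
    (humono : Monotone u) (hutop : Filter.Tendsto u Filter.atTop Filter.atTop)
    (hℓbdd : ∃ C : ℝ, ∀ n, |ℓ n| ≤ C)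
    (lstar : ℝ) (hlstar : gunder ε lstar = δ)
    (huniq : ∀ ℓ' : ℝ, gunder ε ℓ' = δ → ℓ' = lstar) :
    Filter.Tendsto ℓ Filter.atTop (nhds lstar) := by
  obtain ⟨C, hC⟩ := hℓbdd
  apply Filter.tendsto_of_subseq_tendsto
  intro ns hns
  have hmem : ∀ n, ℓ (ns n) ∈ Set.Icc (-C) C := fun n => abs_le.1 (hC (ns n))
  obtain ⟨a, -, φ, hφmono, hφlim⟩ :=
    tendsto_subseq_of_bounded (Metric.isBounded_Icc (-C) C) hmem
  have huu : Filter.Tendsto (fun k => u (ns (φ k))) Filter.atTop Filter.atTop :=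
    hutop.comp (hns.comp hφmono.tendsto_atTop)
  have hkey := g_tendsto_gunder ε hε.1 (by linarith [hε.2] : ε < 1)
    (fun k => ℓ (ns (φ k))) (fun k => u (ns (φ k))) a hφlim huu
  have hconst : Filter.Tendsto (fun k => g ε (ℓ (ns (φ k))) (u (ns (φ k)))) Filter.atTop
      (nhds δ) := by
    simp only [hcurve]
    exact tendsto_const_nhds
  have ha : gunder ε a = δ := tendsto_nhds_unique hkey hconst
  rw [huniq a ha] at hφlim
  exact ⟨φ, hφlim⟩
end
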